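/- If 𝐦 ∈ 𝐌_{T̄,ι} and ∞ > ndrk_ι(𝐦) = β > α, then there is 𝐧 ∈ 𝐌_{T̄,ι} with 𝐦 ⊑ 𝐧 and ndrk_ι(𝐧) = α exactly. -/

import Mathlib

open scoped Classical

/-- Elements of the Cantor group `2^ω` (coordinatewise addition mod 2). A node of the tree
`2^{<ω}` of length `ℓ` is encoded as an element of `2^ω` vanishing from coordinate `ℓ` on. -/
abbrev CSeq := ℕ → ZMod 2

/-- The restriction of `x` to its first `l` coordinates (extended by `0`). -/
def restr (x : CSeq) (l : ℕ) : CSeq := fun k => if k < l then x k else 0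

/-- `T` is (the family of level sets of) a tree `⊆ 2^{<ω}` with no maximal nodes. -/
def IsTreeSeq (T : ℕ → Set CSeq) : Prop :=
  (∀ l, ∀ x ∈ T l, restr x l = x) ∧
  (∀ l l', l' ≤ l → ∀ x ∈ T l, restr x l' ∈ T l') ∧
  (∀ l, ∀ x ∈ T l, ∃ y ∈ T (l + 1), restr y l = x)

/-- The set `lim(T)` of `ω`-branches of the tree `T`. -/
def Branches (T : ℕ → Set CSeq) : Set CSeq := {x | ∀ l, restr x l ∈ T l}

/-- The family `𝐌_{T̄,ι}` of finite approximations (Definition 2.10).  The functions `h` and `g`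
are normalized to take the value `0` outside their intended domain
`{(i,η,ν) : i < ι, η,ν ∈ u, η ≠ ν}`. -/
structure MElem (Tbar : ℕ → ℕ → Set CSeq) (iota : ℕ) where
  len : ℕ
  len_pos : 0 < len
  u : Finset CSeq
  u_supp : ∀ x ∈ u, restr x len = x
  card_two : 2 ≤ u.card
  h : ℕ → CSeq → CSeq → ℕ
  g : ℕ → CSeq → CSeq → CSeq
  h_junk : ∀ i η ν, ¬(i < iota ∧ η ∈ u ∧ ν ∈ u ∧ η ≠ ν) → h i η ν = 0
  g_junk : ∀ i η ν, ¬(i < iota ∧ η ∈ u ∧ ν ∈ u ∧ η ≠ ν) → g i η ν = 0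
  g_mem : ∀ i < iota, ∀ η ∈ u, ∀ ν ∈ u, η ≠ ν → g i η ν ∈ Tbar (h i η ν) len
  add_eq : ∀ i < iota, ∀ η ∈ u, ∀ ν ∈ u, η ≠ ν → η + g i η ν = ν + g i ν η
  nodup : ∀ η ∈ u, ∀ ν ∈ u, η ≠ ν → ∀ i < iota, ∀ j < iota,
    (g i η ν = g j η ν → i = j) ∧ (g i ν η = g j ν η → i = j) ∧ g i η ν ≠ g j ν η
  ext_branch : ∃ (F : CSeq → CSeq) (G : ℕ → CSeq → CSeq → CSeq),
    (∀ η ∈ u, restr (F η) len = η) ∧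
    ∀ i < iota, ∀ η ∈ u, ∀ ν ∈ u, η ≠ ν →
      restr (G i η ν) len = g i η ν ∧ G i η ν ∈ Branches (Tbar (h i η ν)) ∧
      F η + G i η ν = F ν + G i ν η

/-- The extension relation `𝐦 ⊑ 𝐧` on `𝐌_{T̄,ι}` (Definition 2.12). -/
def MExt {Tbar : ℕ → ℕ → Set CSeq} {iota : ℕ} (m n : MElem Tbar iota) : Prop :=
  m.len ≤ n.len ∧
  m.u = n.u.image (fun η => restr η m.len) ∧
  ∀ i < iota, ∀ η ∈ n.u, ∀ ν ∈ n.u, η ≠ ν → restr η m.len ≠ restr ν m.len →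
    m.h i (restr η m.len) (restr ν m.len) = n.h i η ν ∧
    m.g i (restr η m.len) (restr ν m.len) = restr (n.g i η ν) m.len

/-- The non-disjointness rank relation `ndrk_ι(𝐦) ≥ α` (Definition 2.14),
defined by transfinite recursion on `α`. -/
noncomputable def ndrkGe (Tbar : ℕ → ℕ → Set CSeq) (iota : ℕ) (α : Ordinal) :
    MElem Tbar iota → Prop :=
  Ordinal.limitRecOn α (fun _ => True)
    (fun _ IH m => ∀ ν ∈ m.u, ∃ n : MElem Tbar iota,
        m.len < n.len ∧ MExt m n ∧ IH n ∧
        2 ≤ (n.u.filter (fun η => restr η m.len = ν)).card)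
    (fun _ _ IH m => ∀ β (hβ : β < _), IH β hβ m)

lemma restr_restr (x : CSeq) {a b : ℕ} (h : a ≤ b) :
    restr (restr x b) a = restr x a := by
  funext k
  simp only [restr]
  by_cases hk : k < a
  · simp [hk, lt_of_lt_of_le hk h]
  · simp [hk]

lemma MExt_trans {Tbar : ℕ → ℕ → Set CSeq} {iota : ℕ} {m n p : MElem Tbar iota}
    (h1 : MExt m n) (h2 : MExt n p) : MExt m p := by
  obtain ⟨hl1, hu1, hg1⟩ := h1
  obtain ⟨hl2, hu2, hg2⟩ := h2
  refine ⟨le_trans hl1 hl2, ?_, ?_⟩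
  · rw [hu1, hu2, Finset.image_image]
    congr 1
    funext η
    exact restr_restr η hl1
  · intro i hi η hη ν hν hne hrne
    have hηn : restr η n.len ∈ n.u := by
      rw [hu2]; exact Finset.mem_image_of_mem _ hη
    have hνn : restr ν n.len ∈ n.u := by
      rw [hu2]; exact Finset.mem_image_of_mem _ hν
    have hrη : restr (restr η n.len) m.len = restr η m.len := restr_restr η hl1
    have hrν : restr (restr ν n.len) m.len = restr ν m.len := restr_restr ν hl1
    have hne' : restr η n.len ≠ restr ν n.len := by
      intro hcontra
      apply hrne
      rw [← hrη, ← hrν, hcontra]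
    have h2' := hg2 i hi η hη ν hν hne hne'
    have h1' := hg1 i hi _ hηn _ hνn hne' (by rw [hrη, hrν]; exact hrne)
    rw [hrη, hrν] at h1'
    refine ⟨h1'.1.trans h2'.1, ?_⟩
    rw [h1'.2, h2'.2, restr_restr _ hl1]

lemma ndrkGe_zero (Tbar : ℕ → ℕ → Set CSeq) (iota : ℕ) (m : MElem Tbar iota) :
    ndrkGe Tbar iota 0 m := by
  unfold ndrkGe
  rw [Ordinal.limitRecOn_zero]
  trivial

lemma ndrkGe_succ (Tbar : ℕ → ℕ → Set CSeq) (iota : ℕ) (α : Ordinal)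
    (m : MElem Tbar iota) :
    ndrkGe Tbar iota (α + 1) m ↔ ∀ ν ∈ m.u, ∃ n : MElem Tbar iota,
      m.len < n.len ∧ MExt m n ∧ ndrkGe Tbar iota α n ∧
      2 ≤ (n.u.filter (fun η => restr η m.len = ν)).card := by
  unfold ndrkGe
  rw [Ordinal.add_one_eq_succ, Ordinal.limitRecOn_succ]

lemma ndrkGe_limit (Tbar : ℕ → ℕ → Set CSeq) (iota : ℕ) {α : Ordinal}
    (hα : Order.IsSuccLimit α) (m : MElem Tbar iota) :
    ndrkGe Tbar iota α m ↔ ∀ β < α, ndrkGe Tbar iota β m := by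
  unfold ndrkGe
  rw [Ordinal.limitRecOn_limit _ _ _ _ hα]

lemma ndrkGe_succ_imp (Tbar : ℕ → ℕ → Set CSeq) (iota : ℕ) :
    ∀ γ : Ordinal, ∀ m : MElem Tbar iota,
      ndrkGe Tbar iota (γ + 1) m → ndrkGe Tbar iota γ m := by
  intro γ
  induction γ using Ordinal.induction with
  | h γ IH =>
    intro m hm
    rcases Ordinal.zero_or_succ_or_isSuccLimit γ with h0 | ⟨δ, hδ⟩ | hlim
    · subst h0; exact ndrkGe_zero Tbar iota m
    · rw [← Ordinal.add_one_eq_succ] at hδ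
      subst hδ
      rw [ndrkGe_succ] at hm ⊢
      intro ν hν
      obtain ⟨n, h1, h2, h3, h4⟩ := hm ν hν
      exact ⟨n, h1, h2, IH δ (Order.lt_succ δ) n (by rwa [Ordinal.add_one_eq_succ] at h3 ⊢), h4⟩
    · rw [ndrkGe_succ] at hm
      rw [ndrkGe_limit Tbar iota hlim]
      intro δ hδ
      apply IH δ hδ
      rw [ndrkGe_succ]
      intro ν hν
      obtain ⟨n, h1, h2, h3, h4⟩ := hm ν hν
      rw [ndrkGe_limit Tbar iota hlim] at h3
      exact ⟨n, h1, h2, h3 δ hδ, h4⟩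

lemma ndrkGe_mono (Tbar : ℕ → ℕ → Set CSeq) (iota : ℕ) :
    ∀ β : Ordinal, ∀ α ≤ β, ∀ m : MElem Tbar iota,
      ndrkGe Tbar iota β m → ndrkGe Tbar iota α m := by
  intro β
  induction β using Ordinal.induction with
  | h β IH =>
    intro α hαβ m hm
    rcases eq_or_lt_of_le hαβ with rfl | hlt
    · exact hm
    · rcases Ordinal.zero_or_succ_or_isSuccLimit β with h0 | ⟨δ, hδ⟩ | hlim
      · subst h0; exact absurd hlt (not_lt_zero (a := α))
      · rw [← Ordinal.add_one_eq_succ] at hδ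
        subst hδ
        have hδm : ndrkGe Tbar iota δ m := ndrkGe_succ_imp Tbar iota δ m hm
        have hαδ : α ≤ δ := by
          rw [Ordinal.add_one_eq_succ, Order.lt_succ_iff] at hlt
          exact hlt
        exact IH δ (by rw [Ordinal.add_one_eq_succ]; exact Order.lt_succ δ) α hαδ m hδm
      · rw [ndrkGe_limit Tbar iota hlim] at hm
        exact hm α hlt

/-- If `∞ > ndrk_ι(𝐦) = β > α`, then there is `𝐧 ∈ 𝐌_{T̄,ι}` with `𝐦 ⊑ 𝐧` and
`ndrk_ι(𝐧) = α` exactly. -/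
theorem stmt_13 (Tbar : ℕ → ℕ → Set CSeq) (iota : ℕ)
    (htree : ∀ k, IsTreeSeq (Tbar k)) (hiota : 2 ≤ iota)
    (m : MElem Tbar iota) (α β : Ordinal) (hαβ : α < β)
    (hge : ndrkGe Tbar iota β m) (hexact : ¬ ndrkGe Tbar iota (β + 1) m) :
    ∃ n : MElem Tbar iota, MExt m n ∧
      ndrkGe Tbar iota α n ∧ ¬ ndrkGe Tbar iota (α + 1) n := by
  clear htree hiota
  induction β using Ordinal.induction generalizing m α with
  | h β IH =>
    rw [ndrkGe_succ] at hexact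
    push_neg at hexact
    obtain ⟨ν, hν, hνfail⟩ := hexact
    have hsucc : ndrkGe Tbar iota (α + 1) m := by
      apply ndrkGe_mono Tbar iota β _ _ m hge
      rw [Ordinal.add_one_eq_succ]
      exact Order.succ_le_of_lt hαβ
    rw [ndrkGe_succ] at hsucc
    obtain ⟨n, hlen, hext, hα, hcard⟩ := hsucc ν hν
    have hnβ : ¬ ndrkGe Tbar iota β n := by
      intro h
      exact absurd hcard (not_le.mpr (hνfail n hlen hext h))
    set S : Set Ordinal := {γ | ¬ ndrkGe Tbar iota γ n} with hS
    have hSne : S.Nonempty := ⟨β, hnβ⟩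
    set δ0 := Ordinal.lt_wf.min S hSne with hδ0
    have hδ0mem : δ0 ∈ S := Ordinal.lt_wf.min_mem S hSne
    have hδ0le : δ0 ≤ β := by
      by_contra hcon
      exact Ordinal.lt_wf.not_lt_min S hnβ (not_le.mp hcon)
    rcases Ordinal.zero_or_succ_or_isSuccLimit δ0 with h0 | ⟨γ, hγeq⟩ | hlim
    · rw [h0] at hδ0mem
      exact absurd (ndrkGe_zero Tbar iota n) hδ0mem
    · rw [← Ordinal.add_one_eq_succ, eq_comm] at hγeq
      have hγn : ndrkGe Tbar iota γ n := by
        by_contra hcon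
        exact Ordinal.lt_wf.not_lt_min S hcon
          (show γ < δ0 by rw [hγeq, Ordinal.add_one_eq_succ]; exact Order.lt_succ γ)
      have hγn1 : ¬ ndrkGe Tbar iota (γ + 1) n := by rw [← hγeq]; exact hδ0mem
      have hαγ : α ≤ γ := by
        by_contra hcon
        apply hγn1
        apply ndrkGe_mono Tbar iota α _ _ n hα
        rw [Ordinal.add_one_eq_succ]
        exact Order.succ_le_of_lt (not_le.mp hcon)
      have hγβ : γ < β := lt_of_lt_of_le
        (by rw [hγeq, Ordinal.add_one_eq_succ] at hδ0le ⊢; exact Order.lt_succ γ) hδ0le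
      rcases eq_or_lt_of_le hαγ with rfl | hαγlt
      · exact ⟨n, hext, hα, hγn1⟩
      · obtain ⟨n', h1, h2, h3⟩ := IH γ hγβ n α hαγlt hγn hγn1
        exact ⟨n', MExt_trans hext h1, h2, h3⟩
    · exfalso
      apply hδ0mem
      rw [ndrkGe_limit Tbar iota hlim]
      intro ε hε
      by_contra hcon
      exact Ordinal.lt_wf.not_lt_min S hcon (show ε < δ0 from hε)
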